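/- Let q be a prime power and m, n ≥ 1. For every primitive polynomial f ∈ 𝔽_q[X] of degree mn, there exist C_0 ∈ GL_m(𝔽_q) and C_1, …, C_{n−1} ∈ M_m(𝔽_q) such that the associated (m,n)-block companion matrix T ∈ GL_{mn}(𝔽_q) has order q^{mn} − 1 in GL_{mn}(𝔽_q) and has characteristic polynomial equal to f. In other words, the characteristic-polynomial map from the set of (m,n)-block companion Singer cycles to the set of primitive polynomials of degree mn over 𝔽_q is surjective. -/

import Mathlib

open Polynomial Matrix

/-- The order of a polynomial `f` over a finite field: the least positive
integer `e` such that `f` divides `X ^ e - 1`. -/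
noncomputable def polyOrd {F : Type*} [Field F] (f : F[X]) : ℕ :=
  sInf {e : ℕ | 0 < e ∧ f ∣ X ^ e - 1}

/-- A monic polynomial `f` of degree `N` over `𝔽_q` is primitive if `f(0) ≠ 0`
and `ord f = q ^ N - 1`. -/
def IsPrimitivePoly {F : Type*} [Field F] [Fintype F] (f : F[X]) : Prop :=
  f.Monic ∧ f.eval 0 ≠ 0 ∧ polyOrd f = Fintype.card F ^ f.natDegree - 1

/-- The `(m,n)`-block companion matrix built from `C_0, C_1, …, C_{n-1} ∈ M_m(𝔽_q)`:
the `n × n` block matrix whose `(i+1, i)` block is `I_m` for `1 ≤ i ≤ n-1`, whose last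
block column is `(C_0, C_1, …, C_{n-1})ᵀ`, and whose remaining blocks are zero. -/
def blockCompanion {F : Type*} [Field F] {m n : ℕ}
    (C : Fin n → Matrix (Fin m) (Fin m) F) :
    Matrix (Fin n × Fin m) (Fin n × Fin m) F :=
  Matrix.of fun p q =>
    if (q.1 : ℕ) = n - 1 then C p.1 p.2 q.2
    else if (p.1 : ℕ) = (q.1 : ℕ) + 1 then (if p.2 = q.2 then 1 else 0) else 0


lemma primQ {F : Type*} [Field F] [Fintype F] (f : F[X]) (hN : 0 < f.natDegree) :
    1 < Fintype.card F ^ f.natDegree := by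
  have hq : 2 ≤ Fintype.card F := Fintype.one_lt_card
  calc 1 < 2 ^ f.natDegree := Nat.one_lt_two_pow hN.ne'
  _ ≤ Fintype.card F ^ f.natDegree := Nat.pow_le_pow_left hq _

lemma primOrder {F : Type*} [Field F] [Fintype F] (f : F[X]) (hf : IsPrimitivePoly f)
    (hN : 0 < f.natDegree) :
    (f ∣ X ^ (Fintype.card F ^ f.natDegree - 1) - 1) ∧
      ∀ e, 0 < e → e < Fintype.card F ^ f.natDegree - 1 → ¬ f ∣ X ^ e - 1 := by
  have hQ : 0 < Fintype.card F ^ f.natDegree - 1 := by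
    have := primQ f hN; omega
  obtain ⟨hmonic, h0, hord⟩ := hf
  rw [polyOrd] at hord
  have hne : {e : ℕ | 0 < e ∧ f ∣ X ^ e - 1}.Nonempty := by
    by_contra h
    rw [Set.not_nonempty_iff_eq_empty] at h
    rw [h, Nat.sInf_empty] at hord
    omega
  have hmem := Nat.sInf_mem hne
  rw [hord] at hmem
  refine ⟨hmem.2, fun e he hlt hdvd => ?_⟩
  have := Nat.sInf_le (show e ∈ {e : ℕ | 0 < e ∧ f ∣ X ^ e - 1} from ⟨he, hdvd⟩)
  omega

lemma rootPowIff {F : Type*} [Field F] [Fintype F] (f : F[X]) (e : ℕ) :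
    (AdjoinRoot.root f) ^ e = 1 ↔ f ∣ X ^ e - 1 := by
  rw [← sub_eq_zero]
  have h : (AdjoinRoot.root f) ^ e - 1 = AdjoinRoot.mk f (X ^ e - 1) := by
    rw [map_sub, map_pow, AdjoinRoot.mk_X, (AdjoinRoot.mk f).map_one]
  rw [h, AdjoinRoot.mk_eq_zero]

lemma orderOfRoot {F : Type*} [Field F] [Fintype F] (f : F[X]) (hf : IsPrimitivePoly f)
    (hN : 0 < f.natDegree) :
    orderOf (AdjoinRoot.root f) = Fintype.card F ^ f.natDegree - 1 := by
  obtain ⟨hdvd, hmin⟩ := primOrder f hf hN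
  have hQ : 0 < Fintype.card F ^ f.natDegree - 1 := by
    have := primQ f hN; omega
  have h1 : (AdjoinRoot.root f) ^ (Fintype.card F ^ f.natDegree - 1) = 1 :=
    (rootPowIff f _).mpr hdvd
  have hfin : 0 < orderOf (AdjoinRoot.root f) :=
    orderOf_pos_iff.mpr (isOfFinOrder_iff_pow_eq_one.mpr ⟨_, hQ, h1⟩)
  have hdvd2 := orderOf_dvd_of_pow_eq_one h1
  have hle := Nat.le_of_dvd hQ hdvd2
  have hge : Fintype.card F ^ f.natDegree - 1 ≤ orderOf (AdjoinRoot.root f) := by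
    by_contra hlt
    push_neg at hlt
    exact hmin _ hfin hlt ((rootPowIff f _).mp (pow_orderOf_eq_one _))
  omega

lemma primIrreducible {F : Type*} [Field F] [Fintype F] (f : F[X]) (hf : IsPrimitivePoly f)
    (hN : 0 < f.natDegree) : Irreducible f := by
  classical
  have hf0 : f ≠ 0 := hf.1.ne_zero
  haveI : Module.Finite F (AdjoinRoot f) :=
    Module.Finite.of_basis (AdjoinRoot.powerBasis hf0).basis
  letI : Fintype (AdjoinRoot f) := Module.fintypeOfFintype (AdjoinRoot.powerBasis hf0).basis
  have hcard : Fintype.card (AdjoinRoot f) = Fintype.card F ^ f.natDegree := by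
    rw [Module.card_fintype (AdjoinRoot.powerBasis hf0).basis]
    congr 1
    rw [Fintype.card_fin]
    rfl
  haveI : Nontrivial (AdjoinRoot f) :=
    Fintype.one_lt_card_iff_nontrivial.mp (by rw [hcard]; exact primQ f hN)
  have hord := orderOfRoot f hf hN
  have hQ : 0 < Fintype.card F ^ f.natDegree - 1 := by have := primQ f hN; omega
  have h1 : (AdjoinRoot.root f) ^ (Fintype.card F ^ f.natDegree - 1) = 1 := by
    rw [← hord]; exact pow_orderOf_eq_one _
  obtain ⟨u, hu⟩ := IsUnit.of_pow_eq_one h1 hQ.ne'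
  have hinj : Function.Injective (fun v : (AdjoinRoot f)ˣ =>
      (⟨(v : AdjoinRoot f), v.ne_zero⟩ : {x : AdjoinRoot f // x ≠ 0})) := by
    intro a b hab
    exact Units.ext (congrArg Subtype.val hab)
  have hcard_ne : Fintype.card {x : AdjoinRoot f // x ≠ 0} =
      Fintype.card F ^ f.natDegree - 1 := by
    rw [Fintype.card_subtype_compl, hcard, Fintype.card_subtype_eq (0 : AdjoinRoot f)]
  have hle : Fintype.card (AdjoinRoot f)ˣ ≤ Fintype.card F ^ f.natDegree - 1 := by
    rw [← hcard_ne]; exact Fintype.card_le_of_injective _ hinj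
  have hge : Fintype.card F ^ f.natDegree - 1 ≤ Fintype.card (AdjoinRoot f)ˣ := by
    have hou : orderOf u = Fintype.card F ^ f.natDegree - 1 := by
      rw [← orderOf_units, hu, hord]
    rw [← hou]; exact orderOf_le_card_univ
  have hbij := (Fintype.bijective_iff_injective_and_card _).mpr
    ⟨hinj, by rw [hcard_ne]; omega⟩
  have hfield : IsField (AdjoinRoot f) := by
    refine ⟨exists_pair_ne _, mul_comm, fun {a} ha => ?_⟩
    obtain ⟨v, hv⟩ := hbij.2 ⟨a, ha⟩
    have : (v : AdjoinRoot f) = a := congrArg Subtype.val hv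
    exact ⟨↑v⁻¹, by rw [← this]; exact v.mul_inv⟩
  have hmax : (Ideal.span {f}).IsMaximal := Ideal.Quotient.maximal_of_isField _ hfield
  exact ((Ideal.span_singleton_prime hf0).mp hmax.isPrime).irreducible

set_option maxHeartbeats 1600000 in
set_option synthInstance.maxHeartbeats 400000 in
/-- For every primitive polynomial `f` of degree `mn` over `𝔽_q` there is an
`(m,n)`-block companion matrix `T` with `C_0` invertible such that `T` has order
`q^{mn} - 1` in `GL_{mn}(𝔽_q)` and characteristic polynomial `f`: the
characteristic-polynomial map from block companion Singer cycles to primitive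
polynomials of degree `mn` is surjective. -/
theorem stmt_17 {F : Type*} [Field F] [Fintype F] (m n : ℕ) (hm : 1 ≤ m) (hn : 1 ≤ n)
    (f : F[X]) (hf : IsPrimitivePoly f) (hdeg : f.natDegree = m * n) :
    ∃ C : Fin n → Matrix (Fin m) (Fin m) F, IsUnit (C ⟨0, hn⟩) ∧
      ∃ U : (Matrix (Fin n × Fin m) (Fin n × Fin m) F)ˣ,
        (U : Matrix (Fin n × Fin m) (Fin n × Fin m) F) = blockCompanion C ∧
        orderOf U = Fintype.card F ^ (m * n) - 1 ∧
        (blockCompanion C).charpoly = f := by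
  classical
  have hq2 : 2 ≤ Fintype.card F := Fintype.one_lt_card
  have hN : 0 < f.natDegree := by rw [hdeg]; positivity
  have hQ1 : 1 < Fintype.card F ^ (m * n) := by
    calc 1 < 2 ^ (m*n) := Nat.one_lt_two_pow (by positivity)
    _ ≤ Fintype.card F ^ (m*n) := Nat.pow_le_pow_left hq2 _
  have hqm1 : 1 < Fintype.card F ^ m := by
    calc 1 < 2 ^ m := Nat.one_lt_two_pow (by omega)
    _ ≤ Fintype.card F ^ m := Nat.pow_le_pow_left hq2 _
  haveI : Fact (Irreducible f) := ⟨primIrreducible f hf hN⟩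
  have hf0 : f ≠ 0 := hf.1.ne_zero
  set E := AdjoinRoot f with hE
  set α : E := AdjoinRoot.root f with hα
  let pb : PowerBasis F E := AdjoinRoot.powerBasis hf0
  haveI : Module.Finite F E := Module.Finite.of_basis pb.basis
  letI : Fintype E := Module.fintypeOfFintype pb.basis
  have hordα : orderOf α = Fintype.card F ^ (m * n) - 1 := by
    rw [← hdeg]; exact orderOfRoot f hf hN
  have hα1 : α ^ (Fintype.card F ^ (m * n) - 1) = 1 := by
    rw [← hordα]; exact pow_orderOf_eq_one _
  obtain ⟨uα, huα⟩ := IsUnit.of_pow_eq_one hα1 (by omega)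
  have hα0 : α ≠ 0 := huα ▸ uα.ne_zero
  -- characteristic
  haveI : Fact ((ringChar F).Prime) := ⟨(FiniteField.card F (ringChar F)).choose_spec.1⟩
  obtain ⟨k, -, hqpk⟩ := FiniteField.card F (ringChar F)
  haveI : CharP E (ringChar F) :=
    charP_of_injective_algebraMap (algebraMap F E).injective _
  -- the intermediate field
  set K : IntermediateField F E :=
    { carrier := {x : E | x ^ Fintype.card F ^ m = x}
      mul_mem' := fun {a b} ha hb => by
        simp only [Set.mem_setOf_eq] at *; rw [mul_pow, ha, hb]
      one_mem' := by simp
      add_mem' := fun {a b} ha hb => by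
        simp only [Set.mem_setOf_eq] at *
        have hq : Fintype.card F ^ m = ringChar F ^ ((k : ℕ) * m) := by
          rw [hqpk, ← pow_mul]
        rw [hq] at ha hb ⊢
        rw [add_pow_char_pow, ha, hb]
      zero_mem' := by
        simp only [Set.mem_setOf_eq]
        exact zero_pow (by positivity)
      algebraMap_mem' := fun a => by
        simp only [Set.mem_setOf_eq, ← map_pow, FiniteField.pow_card_pow]
      inv_mem' := fun x hx => by
        simp only [Set.mem_setOf_eq] at *; rw [inv_pow, hx] } with hK
  haveI : FiniteDimensional F E := inferInstance
  letI : Fintype ↥K := Fintype.ofFinite ↥K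
  -- cardinality of K
  have hcardK : Fintype.card ↥K = Fintype.card F ^ m := by
    have hupper : Fintype.card ↥K ≤ Fintype.card F ^ m := by
      set P : E[X] := X ^ Fintype.card F ^ m - X with hP
      have hP0 : P ≠ 0 := FiniteField.X_pow_card_pow_sub_X_ne_zero E (by omega) hq2
      have hPdeg : P.natDegree = Fintype.card F ^ m :=
        FiniteField.X_pow_card_pow_sub_X_natDegree_eq E (by omega) hq2
      have hinj : Function.Injective (fun x : ↥K =>
          (⟨(x : E), by
            rw [Multiset.mem_toFinset, Polynomial.mem_roots hP0]
            have hx : (x : E) ^ Fintype.card F ^ m = (x : E) := x.2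
            simp [hP, Polynomial.IsRoot, sub_eq_zero, hx]⟩ : {y : E // y ∈ P.roots.toFinset})) := by
        intro a b hab
        injection hab with h
        exact Subtype.ext h
      calc Fintype.card ↥K ≤ Fintype.card {y : E // y ∈ P.roots.toFinset} :=
            Fintype.card_le_of_injective _ hinj
      _ = P.roots.toFinset.card := Fintype.card_coe _
      _ ≤ Multiset.card P.roots := P.roots.toFinset_card_le
      _ ≤ P.natDegree := P.card_roots'
      _ = Fintype.card F ^ m := hPdeg
    have hlower : Fintype.card F ^ m ≤ Fintype.card ↥K := by
      set s : ℕ := (Fintype.card F ^ (m * n) - 1) / (Fintype.card F ^ m - 1) with hs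
      have hdvd : Fintype.card F ^ m - 1 ∣ Fintype.card F ^ (m * n) - 1 := by
        have := Nat.sub_dvd_pow_sub_pow (Fintype.card F ^ m) 1 n
        rwa [one_pow, ← pow_mul] at this
      have hsmul : s * (Fintype.card F ^ m - 1) = Fintype.card F ^ (m * n) - 1 :=
        Nat.div_mul_cancel hdvd
      have hsdvd : s ∣ Fintype.card F ^ (m * n) - 1 := ⟨_, hsmul.symm⟩
      set γ : E := α ^ s with hγ
      have hordγ : orderOf γ = Fintype.card F ^ m - 1 := by
        have hs0 : s ≠ 0 := by
          intro h
          rw [h, zero_mul] at hsmul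
          omega
        rw [hγ, orderOf_pow' _ hs0, hordα, Nat.gcd_eq_right hsdvd]
        exact Nat.div_eq_of_eq_mul_left (Nat.pos_of_ne_zero hs0) (by rw [mul_comm (Fintype.card F ^ m - 1) s]; exact hsmul.symm)
      have hγ1 : γ ^ (Fintype.card F ^ m - 1) = 1 := by
        rw [← hordγ]; exact pow_orderOf_eq_one _
      have hγK : γ ∈ K := by
        show γ ^ Fintype.card F ^ m = γ
        have h1 : Fintype.card F ^ m = (Fintype.card F ^ m - 1) + 1 := by omega
        rw [h1, pow_succ, hγ1, one_mul]
      set γK : ↥K := ⟨γ, hγK⟩ with hγKdef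
      have hγK1 : γK ^ (Fintype.card F ^ m - 1) = 1 := by
        apply Subtype.ext
        push_cast
        exact hγ1
      have hordγK : orderOf γK = Fintype.card F ^ m - 1 := by
        have hinj : Function.Injective (algebraMap ↥K E) := (algebraMap ↥K E).injective
        have := orderOf_injective (algebraMap ↥K E).toMonoidHom hinj γK
        rw [← this]
        convert hordγ using 2
        rfl
      obtain ⟨uγ, huγ⟩ := IsUnit.of_pow_eq_one hγK1 (by omega)
      have hordu : orderOf uγ = Fintype.card F ^ m - 1 := by
        rw [← orderOf_units, huγ, hordγK]
      have h1 := orderOf_le_card_univ (x := uγ)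
      rw [hordu] at h1
      have h2 : Fintype.card (↥K)ˣ = Fintype.card ↥K - 1 := Fintype.card_units (α := ↥K)
      omega
    omega
  have hfrkK : Module.finrank F ↥K = m := by
    have h1 : Fintype.card ↥K = Fintype.card F ^ Module.finrank F ↥K :=
      Module.card_eq_pow_finrank
    rw [hcardK] at h1
    exact (Nat.pow_right_injective hq2 h1.symm)
  have hfrkE : Module.finrank F E = m * n := by
    rw [pb.finrank]
    show f.natDegree = m * n
    exact hdeg
  haveI : FiniteDimensional ↥K E := FiniteDimensional.right F ↥K E
  have hfrkKE : Module.finrank ↥K E = n := by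
    have := Module.finrank_mul_finrank F ↥K E
    rw [hfrkK, hfrkE] at this
    exact Nat.eq_of_mul_eq_mul_left (by omega) this
  -- generation of E over K by α
  have hadj : Algebra.adjoin ↥K ({α} : Set E) = ⊤ := by
    rw [eq_top_iff]
    intro x _
    have hx : x ∈ Algebra.adjoin F ({α} : Set E) := by
      rw [AdjoinRoot.adjoinRoot_eq_top]; trivial
    have hle : Algebra.adjoin F ({α} : Set E) ≤
        (Algebra.adjoin ↥K ({α} : Set E)).restrictScalars F := by
      apply Algebra.adjoin_le
      intro y hy
      exact Algebra.subset_adjoin hy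
    exact hle hx
  have hKα : IntermediateField.adjoin ↥K ({α} : Set E) = ⊤ := by
    rw [eq_top_iff]
    intro x _
    have : x ∈ Algebra.adjoin ↥K ({α} : Set E) := by rw [hadj]; trivial
    exact IntermediateField.algebra_adjoin_le_adjoin ↥K ({α} : Set E) this
  have hint : IsIntegral ↥K α := IsIntegral.of_finite ↥K α
  have hmindeg : (minpoly ↥K α).natDegree = n := by
    have h1 := IntermediateField.adjoin.finrank hint
    rw [hKα, IntermediateField.finrank_top'] at h1
    rw [← h1, hfrkKE]
  -- the K-basis of E given by powers of α
  haveI : Nonempty (Fin n) := ⟨⟨0, hn⟩⟩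
  have li : LinearIndependent ↥K (fun i : Fin n => α ^ (i : ℕ)) :=
    (linearIndependent_pow α).comp (finCongr hmindeg.symm) (finCongr hmindeg.symm).injective
  have hcardn : Fintype.card (Fin n) = Module.finrank ↥K E := by
    rw [Fintype.card_fin, hfrkKE]
  set b : Module.Basis (Fin n) ↥K E := basisOfLinearIndependentOfCardEqFinrank li hcardn with hbdef
  have hb : ∀ i : Fin n, b i = α ^ (i : ℕ) := by
    intro i
    rw [hbdef, coe_basisOfLinearIndependentOfCardEqFinrank]
  -- the F-basis of K
  set w : Module.Basis (Fin m) F ↥K := Module.finBasisOfFinrankEq F ↥K hfrkK with hwdef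
  -- the combined basis
  set v : Module.Basis (Fin n × Fin m) F E :=
    (w.smulTower b).reindex (Equiv.prodComm (Fin m) (Fin n)) with hvdef
  have hv : ∀ (i : Fin n) (j : Fin m), v (i, j) = (w j : E) * α ^ (i : ℕ) := by
    intro i j
    rw [hvdef, Module.Basis.reindex_apply]
    have : (Equiv.prodComm (Fin m) (Fin n)).symm (i, j) = (j, i) := rfl
    rw [this, Module.Basis.smulTower_apply, hb]
    rfl
  have hrepr : ∀ (x : E) (i : Fin n) (j : Fin m),
      v.repr x (i, j) = w.repr (b.repr x i) j := by
    intro x i j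
    rw [hvdef, Module.Basis.repr_reindex_apply]
    exact w.smulTower_repr b x (j, i)
  -- the matrix of multiplication by α
  set T : Matrix (Fin n × Fin m) (Fin n × Fin m) F := Algebra.leftMulMatrix v α with hTdef
  have hlast : n - 1 < n := by omega
  set C : Fin n → Matrix (Fin m) (Fin m) F :=
    fun i => Matrix.of fun r s => T (i, r) (⟨n - 1, hlast⟩, s) with hCdef
  have hTB : T = blockCompanion C := by
    funext pq qq
    obtain ⟨p1, p2⟩ := pq
    obtain ⟨q1, q2⟩ := qq
    show T (p1, p2) (q1, q2) = _
    rw [blockCompanion, Matrix.of_apply]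
    by_cases h1 : (q1 : ℕ) = n - 1
    · rw [if_pos h1]
      have hq1 : q1 = ⟨n - 1, hlast⟩ := Fin.ext h1
      rw [hq1]
      rfl
    · rw [if_neg h1]
      have hq1n : (q1 : ℕ) + 1 < n := by
        have := q1.isLt
        omega
      rw [hTdef, Algebra.leftMulMatrix_eq_repr_mul]
      have hmul : α * v (q1, q2) = v (⟨(q1 : ℕ) + 1, hq1n⟩, q2) := by
        rw [hv, hv]
        show α * ((w q2 : E) * α ^ (q1 : ℕ)) = (w q2 : E) * α ^ ((q1 : ℕ) + 1)
        rw [pow_succ]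
        ring
      rw [hmul, Module.Basis.repr_self, Finsupp.single_apply]
      by_cases h2 : (p1 : ℕ) = (q1 : ℕ) + 1
      · rw [if_pos h2]
        have hp1 : (⟨(q1 : ℕ) + 1, hq1n⟩ : Fin n) = p1 := Fin.ext h2.symm
        by_cases h3 : p2 = q2
        · rw [if_pos h3, if_pos (by rw [hp1, h3])]
        · rw [if_neg h3, if_neg (by
            intro hcon
            rw [Prod.mk.injEq] at hcon
            exact h3 hcon.2.symm)]
      · rw [if_neg h2, if_neg (by
          intro hcon
          rw [Prod.mk.injEq] at hcon
          apply h2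
          rw [← hcon.1])]
  -- characteristic polynomial
  have hcharT : T.charpoly = f := by
    have h1 : T.charpoly = (Algebra.lmul F E α).charpoly := by
      rw [hTdef, Algebra.leftMulMatrix_apply]
      exact LinearMap.charpoly_toMatrix _ v
    have h2 : (Algebra.leftMulMatrix pb.basis pb.gen).charpoly
        = (Algebra.lmul F E α).charpoly := by
      have hgen : pb.gen = α := AdjoinRoot.powerBasis_gen hf0
      rw [hgen, Algebra.leftMulMatrix_apply]
      exact LinearMap.charpoly_toMatrix _ pb.basis
    rw [h1, ← h2, charpoly_leftMulMatrix pb]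
    rw [AdjoinRoot.powerBasis_gen hf0]
    show minpoly F (AdjoinRoot.root f) = f
    rw [AdjoinRoot.minpoly_root hf0, hf.1.leadingCoeff, inv_one, Polynomial.C_1, mul_one]
  -- the constant block
  set c0 : ↥K := b.repr (α ^ n) ⟨0, hn⟩ with hc0def
  have hC0 : C ⟨0, hn⟩ = Algebra.leftMulMatrix w c0 := by
    funext r s
    show T (⟨0, hn⟩, r) (⟨n - 1, hlast⟩, s) = _
    rw [hTdef, Algebra.leftMulMatrix_eq_repr_mul, Algebra.leftMulMatrix_eq_repr_mul]
    have hmul2 : α * v (⟨n - 1, hlast⟩, s) = (w s : E) * α ^ n := by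
      rw [hv]
      show α * ((w s : E) * α ^ (n - 1)) = (w s : E) * α ^ n
      have hn1 : n = (n - 1) + 1 := by omega
      conv_rhs => rw [hn1]
      rw [pow_succ]
      ring
    rw [hmul2, hrepr]
    have hsm : (w s : E) * α ^ n = (w s) • (α ^ n) := by
      rw [Algebra.smul_def]
      congr 1
    rw [hsm, _root_.map_smul, Finsupp.smul_apply, smul_eq_mul, ← hc0def, mul_comm]
  have hc0 : c0 ≠ 0 := by
    set g : Polynomial ↥K := minpoly ↥K α with hgdef
    have hg0 : g.coeff 0 ≠ 0 := minpoly.coeff_zero_ne_zero hint hα0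
    have haev : Polynomial.aeval α g = 0 := minpoly.aeval _ _
    rw [Polynomial.aeval_eq_sum_range] at haev
    rw [show g.natDegree = n from hmindeg] at haev
    rw [Finset.sum_range_succ] at haev
    have hgn : g.coeff n = 1 := by
      have h := (minpoly.monic hint).coeff_natDegree
      rwa [hmindeg] at h
    rw [hgn, one_smul] at haev
    have hsum : α ^ n = ∑ i : Fin n, (-(g.coeff (i : ℕ))) • b i := by
      have h4 : α ^ n = -∑ i ∈ Finset.range n, g.coeff i • α ^ i :=
        eq_neg_of_add_eq_zero_right haev
      rw [h4, ← Fin.sum_univ_eq_sum_range (fun i => g.coeff i • α ^ i) n, ← Finset.sum_neg_distrib]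
      refine Finset.sum_congr rfl fun i _ => ?_
      rw [hb, neg_smul]
    have h6 : c0 = -(g.coeff 0) := by
      have h5 := b.repr_sum_self (fun i : Fin n => -(g.coeff (i : ℕ)))
      rw [hc0def, hsum]
      exact congrFun h5 ⟨0, hn⟩
    rw [h6]
    exact neg_ne_zero.mpr hg0
  have hunitC0 : IsUnit (C ⟨0, hn⟩) := by
    rw [hC0]
    exact IsUnit.map (Algebra.leftMulMatrix w) (isUnit_iff_ne_zero.mpr hc0)
  -- the unit
  set ψ : E →* Matrix (Fin n × Fin m) (Fin n × Fin m) F :=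
    (Algebra.leftMulMatrix v).toRingHom.toMonoidHom with hψdef
  have hψinj : Function.Injective ψ := fun x y hxy =>
    Algebra.leftMulMatrix_injective v hxy
  refine ⟨C, hunitC0, Units.map ψ uα, ?_, ?_, by rw [← hTB]; exact hcharT⟩
  · show ψ (uα : E) = blockCompanion C
    rw [huα, ← hTB]
    rfl
  · have h1 : orderOf (Units.map ψ uα) = orderOf uα :=
      orderOf_injective (Units.map ψ) (Units.map_injective hψinj) uα
    rw [h1, ← orderOf_units, huα, hordα]
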